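/- In F₂((ℤ)) with a = t − t^p for a prime p, the support of (1−a)⁻¹ is a proper subset of ⨁_{n∈ℕ} supp(a) = ℕ; in particular, p ∉ supp((1−a)⁻¹). -/

import Mathlib

/-- In `𝔽_p((ℤ))` with `a = t − t^p` for a prime `p`, the support of
`(1 − a)⁻¹` is a proper subset of `⨁_{n∈ℕ} supp a`, which equals `ℕ` (the nonnegative
integers inside `ℤ`); in particular `p ∉ supp ((1 − a)⁻¹)`. -/
theorem support_geom_inv_proper (p : ℕ) [Fact p.Prime] :
    ∀ a : HahnSeries ℤ (ZMod p),
      a = HahnSeries.single (1 : ℤ) (1 : ZMod p) - HahnSeries.single (p : ℤ) (1 : ZMod p) →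
      (AddSubmonoid.closure a.support : Set ℤ) = {n : ℤ | 0 ≤ n} ∧
      ((1 - a)⁻¹).support ⊂ (AddSubmonoid.closure a.support : Set ℤ) ∧
      (p : ℤ) ∉ ((1 - a)⁻¹).support := by
  intro a ha
  have hp : p.Prime := Fact.out
  have hp2 : 2 ≤ p := hp.two_le
  have h1p : (1 : ℤ) ≠ (p : ℤ) := by
    have : (2 : ℤ) ≤ (p : ℤ) := by exact_mod_cast hp2
    omega
  -- support of a is {1, p}
  have hsupp : a.support = {(1 : ℤ), (p : ℤ)} := by
    ext z
    simp only [HahnSeries.mem_support, ha, HahnSeries.coeff_sub, HahnSeries.coeff_single,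
      Set.mem_insert_iff, Set.mem_singleton_iff, Pi.sub_apply]
    rcases eq_or_ne z 1 with rfl | h1
    · simp [h1p]
    · rcases eq_or_ne z (p : ℤ) with rfl | h2
      · simp [h1]
      · simp [h1, h2]
  -- closure of {1, p} is the nonnegative integers
  have hcl : (AddSubmonoid.closure a.support : Set ℤ) = {n : ℤ | 0 ≤ n} := by
    rw [hsupp]
    ext n
    constructor
    · intro hn
      have key : ∀ x ∈ AddSubmonoid.closure ({(1 : ℤ), (p : ℤ)} : Set ℤ), 0 ≤ x := by
        intro x hx
        induction hx using AddSubmonoid.closure_induction with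
        | mem y hy =>
          rcases hy with rfl | rfl
          · exact zero_le_one
          · exact Int.natCast_nonneg p
        | zero => exact le_rfl
        | add x y _ _ hx hy => exact add_nonneg hx hy
      exact key n hn
    · intro hn
      have hn' : n = n.toNat • (1 : ℤ) := by
        simp [Int.toNat_of_nonneg hn]
      rw [hn']
      exact (AddSubmonoid.closure _).nsmul_mem
        (AddSubmonoid.subset_closure (Set.mem_insert _ _)) _
  -- power series computation
  obtain ⟨u, hu⟩ : ∃ u : PowerSeries (ZMod p), u = 1 - PowerSeries.X + PowerSeries.X ^ p :=
    ⟨_, rfl⟩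
  have hcc : PowerSeries.constantCoeff u = 1 := by
    simp [hu, zero_pow hp.ne_zero]
  have hcc0 : PowerSeries.constantCoeff u ≠ 0 := by
    rw [hcc]; exact one_ne_zero
  have huv : u * u⁻¹ = 1 := PowerSeries.mul_inv_cancel u hcc0
  have hv0 : PowerSeries.coeff 0 u⁻¹ = 1 := by
    rw [PowerSeries.coeff_zero_eq_constantCoeff, PowerSeries.constantCoeff_inv, hcc, inv_one]
  have hrec : ∀ n : ℕ, PowerSeries.coeff (n + 1) u⁻¹
      = PowerSeries.coeff n u⁻¹
        - (if p ≤ n + 1 then PowerSeries.coeff (n + 1 - p) u⁻¹ else 0) := by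
    intro n
    have h := congrArg (PowerSeries.coeff (n + 1)) huv
    rw [hu] at h ⊢
    rw [add_mul, sub_mul, one_mul] at h
    rw [map_add, map_sub, PowerSeries.coeff_succ_X_mul, PowerSeries.coeff_X_pow_mul',
      PowerSeries.coeff_one, if_neg (Nat.succ_ne_zero n)] at h
    linear_combination h
  have hlt : ∀ n : ℕ, n < p → PowerSeries.coeff n u⁻¹ = 1 := by
    intro n
    induction n with
    | zero => intro _; exact hv0
    | succ m ih =>
      intro hm
      rw [hrec m, if_neg (by omega), sub_zero, ih (by omega)]
  have hvp : PowerSeries.coeff p u⁻¹ = 0 := by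
    have h := hrec (p - 1)
    rw [Nat.sub_add_cancel (by omega)] at h
    rw [if_pos le_rfl, Nat.sub_self, hv0, hlt (p - 1) (by omega)] at h
    rw [h, sub_self]
  -- transfer to Hahn series
  have hF : True := trivial
  have hFu : HahnSeries.ofPowerSeries ℤ (ZMod p) u = 1 - a := by
    rw [ha, hu, map_add, map_sub, map_one, HahnSeries.ofPowerSeries_X_pow,
      HahnSeries.ofPowerSeries_X]
    ring
  have hmul : (1 - a) * HahnSeries.ofPowerSeries ℤ (ZMod p) u⁻¹ = 1 := by
    rw [← hFu, ← map_mul, huv, map_one]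
  have hinv : (1 - a)⁻¹ = HahnSeries.ofPowerSeries ℤ (ZMod p) u⁻¹ := inv_eq_of_mul_eq_one_right hmul
  have hcoeffp : ((1 - a)⁻¹).coeff ((p : ℕ) : ℤ) = 0 := by
    rw [hinv, HahnSeries.ofPowerSeries_apply_coeff]
    exact hvp
  have hps : (p : ℤ) ∉ ((1 - a)⁻¹).support := fun hmem => hmem hcoeffp
  have hsub : ((1 - a)⁻¹).support ⊆ {n : ℤ | 0 ≤ n} := by
    intro z hz
    by_contra hneg
    apply hz
    rw [hinv, HahnSeries.ofPowerSeries_apply]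
    refine HahnSeries.embDomain_notin_range ?_
    rintro ⟨m, hm⟩
    exact hneg (show (0 : ℤ) ≤ z from hm ▸ Int.natCast_nonneg m)
  refine ⟨hcl, ?_, hps⟩
  rw [hcl]
  refine ⟨hsub, fun h => hps ?_⟩
  exact h (by simp only [Set.mem_setOf_eq]; exact Int.natCast_nonneg p)
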